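/- In the 3-player game with A_1 = {T,B}, A_2 = {L,R}, A_3 = {E} and payoffs u(T,L) = (1,1,0), u(T,R) = (0,0,1), u(B,L) = (0,0,−1), u(B,R) = (1,1,0), there exist no-regret strategies σ_1, σ_2 for the learners (the regret-matching strategies with specified tie-breaking) such that play follows the period-3 cycle (T,L), (B,R), (B,L), (T,L), (B,R), (B,L), … and consequently the optimizer's long-run average utility equals (0 + 1 + (−1))/3 = −1/3 < 0 = v_mixed. -/

import Mathlib

open MeasureTheory Filter Finset

noncomputable section

/-- Learners' coordination utility in the game of Counterexample 2:
payoff 1 on (T,L) and (B,R), else 0. `T`,`L` are `true`; `B`,`R` are `false`. -/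
def uL (a b : Bool) : ℝ := if a = b then 1 else 0

/-- Optimizer's utility: `u3(T,L)=0, u3(T,R)=1, u3(B,L)=-1, u3(B,R)=0`. -/
def u3 (p : Bool × Bool) : ℝ :=
  if p = (true, false) then 1 else if p = (false, true) then -1 else 0

/-- `r̄ᵗ_{T,B}` of player 1 from a history of length `t`. -/
def rTB {t : ℕ} (h : Fin t → Bool × Bool) : ℝ :=
  (∑ m, if (h m).1 = true then (if (h m).2 = false then (1 : ℝ) else -1) else 0) / t

/-- `r̄ᵗ_{B,T}` of player 1. -/
def rBT {t : ℕ} (h : Fin t → Bool × Bool) : ℝ :=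
  (∑ m, if (h m).1 = false then (if (h m).2 = true then (1 : ℝ) else -1) else 0) / t

/-- `r̄ᵗ_{L,R}` of player 2. -/
def rLR {t : ℕ} (h : Fin t → Bool × Bool) : ℝ :=
  (∑ m, if (h m).2 = true then (if (h m).1 = false then (1 : ℝ) else -1) else 0) / t

/-- `r̄ᵗ_{R,L}` of player 2. -/
def rRL {t : ℕ} (h : Fin t → Bool × Bool) : ℝ :=
  (∑ m, if (h m).2 = false then (if (h m).1 = true then (1 : ℝ) else -1) else 0) / t

/-- Player 1's tie-breaking rule: when `p` is arbitrary, play `T` if the previous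
profile was `(B,L)`, play `B` if it was `(T,L)` or `(B,R)`. -/
def tb1 : (t : ℕ) → (Fin t → Bool × Bool) → ℝ
  | 0, _ => 1
  | (t + 1), h =>
      if h ⟨t, Nat.lt_succ_self t⟩ = (false, true) then 1
      else if h ⟨t, Nat.lt_succ_self t⟩ = (true, true) ∨
              h ⟨t, Nat.lt_succ_self t⟩ = (false, false) then 0
      else 1

/-- Player 2's tie-breaking rule: when `p` is arbitrary, play `L` if the previous
profile was `(B,R)` or `(B,L)`, play `R` if it was `(T,L)`. -/
def tb2 : (t : ℕ) → (Fin t → Bool × Bool) → ℝ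
  | 0, _ => 1
  | (t + 1), h =>
      if h ⟨t, Nat.lt_succ_self t⟩ = (false, false) ∨
          h ⟨t, Nat.lt_succ_self t⟩ = (false, true) then 1
      else if h ⟨t, Nat.lt_succ_self t⟩ = (true, true) then 0
      else 1

/-- Player 1's regret-matching strategy with the above tie-breaking. -/
def Q1 (t : ℕ) (h : Fin t → Bool × Bool) : ℝ :=
  if max (rTB h) 0 + max (rBT h) 0 = 0 then tb1 t h
  else max (rBT h) 0 / (max (rTB h) 0 + max (rBT h) 0)

/-- Player 2's regret-matching strategy with the above tie-breaking. -/
def Q2 (t : ℕ) (h : Fin t → Bool × Bool) : ℝ :=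
  if max (rLR h) 0 + max (rRL h) 0 = 0 then tb2 t h
  else max (rRL h) 0 / (max (rLR h) 0 + max (rRL h) 0)

/-- `play` is consistent with player 1 following `σ` (probability of `T`). -/
def Follows1 {Ω : Type} [MeasurableSpace Ω] (μ : Measure Ω)
    (play : ℕ → Ω → Bool × Bool)
    (σ : (t : ℕ) → (Fin t → Bool × Bool) → ℝ) : Prop :=
  ∀ (t : ℕ) (f : (Fin t → Bool × Bool) → Bool → ℝ),
    ∫ ω, (if (play t ω).1 = true then (1 : ℝ) else 0) *
        f (fun s => play s.1 ω) (play t ω).2 ∂μ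
      = ∫ ω, σ t (fun s => play s.1 ω) * f (fun s => play s.1 ω) (play t ω).2 ∂μ

/-- `play` is consistent with player 2 following `σ` (probability of `L`). -/
def Follows2 {Ω : Type} [MeasurableSpace Ω] (μ : Measure Ω)
    (play : ℕ → Ω → Bool × Bool)
    (σ : (t : ℕ) → (Fin t → Bool × Bool) → ℝ) : Prop :=
  ∀ (t : ℕ) (f : (Fin t → Bool × Bool) → Bool → ℝ),
    ∫ ω, (if (play t ω).2 = true then (1 : ℝ) else 0) *
        f (fun s => play s.1 ω) (play t ω).1 ∂μ
      = ∫ ω, σ t (fun s => play s.1 ω) * f (fun s => play s.1 ω) (play t ω).1 ∂μ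

/-- A strategy `σ` of player 1 has no (external) regret. -/
def NoRegret1 (σ : (t : ℕ) → (Fin t → Bool × Bool) → ℝ) : Prop :=
  ∀ (Ω : Type) (_ : MeasurableSpace Ω) (μ : Measure Ω), IsProbabilityMeasure μ →
    ∀ play : ℕ → Ω → Bool × Bool, (∀ t, Measurable (play t)) →
      Follows1 μ play σ →
      ∀ b : Bool, ∀ᵐ ω ∂μ, Tendsto
        (fun M : ℕ => max ((∑ t ∈ Finset.range M,
          (uL b (play t ω).2 - uL (play t ω).1 (play t ω).2)) / M) 0)
        atTop (nhds 0)

/-- A strategy `σ` of player 2 has no (external) regret. -/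
def NoRegret2 (σ : (t : ℕ) → (Fin t → Bool × Bool) → ℝ) : Prop :=
  ∀ (Ω : Type) (_ : MeasurableSpace Ω) (μ : Measure Ω), IsProbabilityMeasure μ →
    ∀ play : ℕ → Ω → Bool × Bool, (∀ t, Measurable (play t)) →
      Follows2 μ play σ →
      ∀ b : Bool, ∀ᵐ ω ∂μ, Tendsto
        (fun M : ℕ => max ((∑ t ∈ Finset.range M,
          (uL (play t ω).1 b - uL (play t ω).1 (play t ω).2)) / M) 0)
        atTop (nhds 0)

/-- The period-3 cycle `(T,L), (B,R), (B,L), ...`. -/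
def cyc (t : ℕ) : Bool × Bool :=
  if t % 3 = 0 then (true, true) else if t % 3 = 1 then (false, false)
  else (false, true)

/-- Expected value of a payoff function under a mixed profile `(z₁, z₂)`. -/
def pay (f : Bool → Bool → ℝ) (z₁ z₂ : Bool → ℝ) : ℝ :=
  ∑ a, ∑ b, z₁ a * z₂ b * f a b


section Aux

-- instantaneous regrets
def xval (p : Bool × Bool) : ℝ := if p.1 = true then (if p.2 = false then 1 else -1) else 0
def yval (p : Bool × Bool) : ℝ := if p.1 = false then (if p.2 = true then 1 else -1) else 0

lemma abs_xval_le (p) : |xval p| ≤ 1 := by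
  rcases p with ⟨a, b⟩; rcases a <;> rcases b <;> norm_num [xval]
lemma abs_yval_le (p) : |yval p| ≤ 1 := by
  rcases p with ⟨a, b⟩; rcases a <;> rcases b <;> norm_num [yval]

/-- closed form for sums of a function along the cycle -/
lemma cyc_sum_closed (w : Bool × Bool → ℝ) (t : ℕ) :
    ∑ m ∈ range t, w (cyc m)
      = (↑(t / 3)) * (w (true,true) + w (false,false) + w (false,true))
        + (if t % 3 = 0 then 0 else if t % 3 = 1 then w (true,true)
           else w (true,true) + w (false,false)) := by
  induction t with
  | zero => simp
  | succ t ih =>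
    rw [Finset.sum_range_succ, ih]
    have h3 : t % 3 = 0 ∨ t % 3 = 1 ∨ t % 3 = 2 := by omega
    rcases h3 with h | h | h
    · have h1 : (t+1) % 3 = 1 := by omega
      have h2 : (t+1) / 3 = t / 3 := by omega
      simp only [cyc, h, h1, h2]; norm_num <;> push_cast <;> ring
    · have h1 : (t+1) % 3 = 2 := by omega
      have h2 : (t+1) / 3 = t / 3 := by omega
      simp only [cyc, h, h1, h2]; norm_num <;> push_cast <;> ring
    · have h1 : (t+1) % 3 = 0 := by omega
      have h2 : (t+1) / 3 = t / 3 + 1 := by omega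
      simp only [cyc, h, h1, h2]; norm_num <;> push_cast <;> ring

lemma cyc_sum_nonpos (w : Bool × Bool → ℝ) (h0 : w (true,true) ≤ 0)
    (h1 : w (true,true) + w (false,false) ≤ 0)
    (h2 : w (true,true) + w (false,false) + w (false,true) ≤ 0) (t : ℕ) :
    ∑ m ∈ range t, w (cyc m) ≤ 0 := by
  rw [cyc_sum_closed]
  have : (0:ℝ) ≤ (↑(t/3) : ℝ) := by positivity
  have hm := mul_nonpos_of_nonneg_of_nonpos this h2
  split_ifs <;> linarith

lemma cyc_u3_sum (M : ℕ) : ∑ t ∈ range M, u3 (cyc t) = -(↑(M / 3) : ℝ) := by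
  rw [cyc_sum_closed u3 M]
  norm_num [u3]

/-- Cesàro limit of u3 along the cycle -/
lemma cyc_u3_tendsto :
    Tendsto (fun M : ℕ => (∑ t ∈ range M, u3 (cyc t)) / M) atTop (nhds (-1/3)) := by
  have h : ∀ M : ℕ, 1 ≤ M → (∑ t ∈ range M, u3 (cyc t)) / M
      = -1/3 + (↑(M % 3) : ℝ) / (3 * M) := by
    intro M hM
    rw [cyc_u3_sum]
    have hM0 : (M:ℝ) ≠ 0 := by positivity
    have hdm : (↑(M / 3) : ℝ) = ((M:ℝ) - ↑(M % 3)) / 3 := by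
      have h := Nat.div_add_mod M 3
      have h' : (3:ℝ) * ↑(M / 3) + ↑(M % 3) = (M:ℝ) := by exact_mod_cast h
      linarith
    rw [hdm]; field_simp; ring
  have hg : Tendsto (fun M : ℕ => (↑(M % 3) : ℝ) / (3 * M)) atTop (nhds 0) := by
    apply squeeze_zero' (g := fun M : ℕ => (1:ℝ)/M)
    · filter_upwards with M; positivity
    · filter_upwards [eventually_ge_atTop 1] with M hM
      have hM0 : (0:ℝ) < M := by exact_mod_cast hM
      rw [div_le_div_iff₀ (by positivity) hM0]
      have h3 : M % 3 ≤ 3 := le_of_lt (Nat.mod_lt _ (by norm_num))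
      have : (↑(M % 3) : ℝ) ≤ 3 := by exact_mod_cast h3
      nlinarith
    · exact tendsto_one_div_atTop_nhds_zero_nat
  have := (tendsto_const_nhds (x := (-1/3 : ℝ)) (f := atTop)).add hg
  rw [add_zero] at this
  apply this.congr'
  filter_upwards [eventually_ge_atTop 1] with M hM
  exact (h M hM).symm

/-- the cycle history of length `t` -/
def cycH (t : ℕ) : Fin t → Bool × Bool := fun s => cyc s.1

lemma rTB_cycH (t : ℕ) : rTB (cycH t) ≤ 0 := by
  apply div_nonpos_of_nonpos_of_nonneg _ (Nat.cast_nonneg t)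
  have : (∑ m : Fin t, if (cycH t m).1 = true then
      (if (cycH t m).2 = false then (1 : ℝ) else -1) else 0)
      = ∑ m ∈ range t, xval (cyc m) := by
    rw [← Fin.sum_univ_eq_sum_range (fun m => xval (cyc m)) t]
    rfl
  rw [this]
  exact cyc_sum_nonpos _ (by norm_num [xval]) (by norm_num [xval]) (by norm_num [xval]) t

lemma rBT_cycH (t : ℕ) : rBT (cycH t) ≤ 0 := by
  apply div_nonpos_of_nonpos_of_nonneg _ (Nat.cast_nonneg t)
  have : (∑ m : Fin t, if (cycH t m).1 = false then
      (if (cycH t m).2 = true then (1 : ℝ) else -1) else 0)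
      = ∑ m ∈ range t, yval (cyc m) := by
    rw [← Fin.sum_univ_eq_sum_range (fun m => yval (cyc m)) t]
    rfl
  rw [this]
  exact cyc_sum_nonpos _ (by norm_num [yval]) (by norm_num [yval]) (by norm_num [yval]) t

def lval (p : Bool × Bool) : ℝ := if p.2 = true then (if p.1 = false then 1 else -1) else 0
def rvalv (p : Bool × Bool) : ℝ := if p.2 = false then (if p.1 = true then 1 else -1) else 0

lemma rLR_cycH (t : ℕ) : rLR (cycH t) ≤ 0 := by
  apply div_nonpos_of_nonpos_of_nonneg _ (Nat.cast_nonneg t)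
  have : (∑ m : Fin t, if (cycH t m).2 = true then
      (if (cycH t m).1 = false then (1 : ℝ) else -1) else 0)
      = ∑ m ∈ range t, lval (cyc m) := by
    rw [← Fin.sum_univ_eq_sum_range (fun m => lval (cyc m)) t]
    rfl
  rw [this]
  exact cyc_sum_nonpos _ (by norm_num [lval]) (by norm_num [lval]) (by norm_num [lval]) t

lemma rRL_cycH (t : ℕ) : rRL (cycH t) ≤ 0 := by
  apply div_nonpos_of_nonpos_of_nonneg _ (Nat.cast_nonneg t)
  have : (∑ m : Fin t, if (cycH t m).2 = false then
      (if (cycH t m).1 = true then (1 : ℝ) else -1) else 0)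
      = ∑ m ∈ range t, rvalv (cyc m) := by
    rw [← Fin.sum_univ_eq_sum_range (fun m => rvalv (cyc m)) t]
    rfl
  rw [this]
  exact cyc_sum_nonpos _ (by norm_num [rvalv]) (by norm_num [rvalv]) (by norm_num [rvalv]) t

lemma max_eq_zero_of_nonpos {a : ℝ} (h : a ≤ 0) : max a 0 = 0 := max_eq_right h

lemma Q1_cycH (t : ℕ) : Q1 t (cycH t) = if (cyc t).1 = true then 1 else 0 := by
  have h1 : Q1 t (cycH t) = tb1 t (cycH t) := by
    unfold Q1
    rw [max_eq_zero_of_nonpos (rTB_cycH t), max_eq_zero_of_nonpos (rBT_cycH t)]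
    simp
  rw [h1]
  cases t with
  | zero => simp [tb1, cyc]
  | succ t =>
    have h3 : t % 3 = 0 ∨ t % 3 = 1 ∨ t % 3 = 2 := by omega
    have hc : cycH (t+1) ⟨t, Nat.lt_succ_self t⟩ = cyc t := rfl
    rcases h3 with h | h | h
    · have h1' : (t+1) % 3 = 1 := by omega
      simp [tb1, hc, cyc, h, h1']
    · have h1' : (t+1) % 3 = 2 := by omega
      simp [tb1, hc, cyc, h, h1']
    · have h1' : (t+1) % 3 = 0 := by omega
      simp [tb1, hc, cyc, h, h1']

lemma Q2_cycH (t : ℕ) : Q2 t (cycH t) = if (cyc t).2 = true then 1 else 0 := by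
  have h1 : Q2 t (cycH t) = tb2 t (cycH t) := by
    unfold Q2
    rw [max_eq_zero_of_nonpos (rLR_cycH t), max_eq_zero_of_nonpos (rRL_cycH t)]
    simp
  rw [h1]
  cases t with
  | zero => simp [tb2, cyc]
  | succ t =>
    have h3 : t % 3 = 0 ∨ t % 3 = 1 ∨ t % 3 = 2 := by omega
    have hc : cycH (t+1) ⟨t, Nat.lt_succ_self t⟩ = cyc t := rfl
    rcases h3 with h | h | h
    · have h1' : (t+1) % 3 = 1 := by omega
      simp [tb2, hc, cyc, h, h1']
    · have h1' : (t+1) % 3 = 2 := by omega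
      simp [tb2, hc, cyc, h, h1']
    · have h1' : (t+1) % 3 = 0 := by omega
      simp [tb2, hc, cyc, h, h1']
section Bridge

lemma tendsto_sqrt_atTop : Tendsto (fun M : ℕ => Nat.sqrt M) atTop atTop := by
  apply tendsto_atTop_atTop.2
  intro b
  exact ⟨b * b, fun a ha => Nat.le_sqrt.2 ha⟩

lemma bridge (p : ℕ → ℝ) (h0 : p 0 = 0) (hinc : ∀ t : ℕ, |p (t + 1) - p t| ≤ 2 * t)
    (hsub : Tendsto (fun n : ℕ => p (n ^ 2) / ((n : ℝ) ^ 2) ^ 2) atTop (nhds 0)) :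
    Tendsto (fun M : ℕ => p M / (M : ℝ) ^ 2) atTop (nhds 0) := by
  have tel : ∀ a k : ℕ, |p (a + k) - p a| ≤ 2 * k * (a + k) := by
    intro a k
    induction k with
    | zero => simp
    | succ k ih =>
      have h1 := hinc (a + k)
      have h2 := abs_sub_le (p (a + k + 1)) (p (a + k)) (p a)
      have h3 : a + (k + 1) = (a + k) + 1 := by omega
      rw [h3]
      push_cast at *
      nlinarith [abs_nonneg (p (a+k+1) - p (a+k))]
  set g : ℕ → ℝ := fun M => |p ((Nat.sqrt M) ^ 2)| / ((Nat.sqrt M : ℝ) ^ 2) ^ 2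
      + 4 / (Nat.sqrt M : ℝ) + 8 / ((Nat.sqrt M : ℝ)) ^ 2 with hg
  have claimA : ∀ M : ℕ, 1 ≤ M → |p M / (M : ℝ) ^ 2| ≤ g M := by
    intro M hM
    set n := Nat.sqrt M with hn
    have hn1 : 1 ≤ n := by
      rw [hn]; exact Nat.sqrt_pos.2 hM
    have h1 : n ^ 2 ≤ M := Nat.sqrt_le' M
    have h2 : M < (n + 1) ^ 2 := Nat.lt_succ_sqrt' M
    have h2' : M ≤ n ^ 2 + 2 * n := by nlinarith [h2]
    have hk : M - n ^ 2 ≤ 2 * n := Nat.sub_le_iff_le_add.2 (by linarith)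
    have tel' := tel (n ^ 2) (M - n ^ 2)
    rw [Nat.add_sub_cancel' h1] at tel'
    have hN1 : (1 : ℝ) ≤ (n : ℝ) := by exact_mod_cast hn1
    have hMn : ((n : ℝ)) ^ 2 ≤ (M : ℝ) := by exact_mod_cast h1
    have hMn2 : (M : ℝ) ≤ (n : ℝ) ^ 2 + 2 * (n : ℝ) := by exact_mod_cast h2'
    have hkR : (↑(M - n ^ 2) : ℝ) ≤ 2 * (n : ℝ) := by exact_mod_cast hk
    have hkR0 : (0:ℝ) ≤ (↑(M - n ^ 2) : ℝ) := Nat.cast_nonneg _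
    have hc2 : (↑(n ^ 2) : ℝ) = (n : ℝ) ^ 2 := by push_cast; ring
    rw [hc2] at tel'
    have htel : |p M - p (n ^ 2)| ≤ 4 * (n : ℝ) ^ 3 + 8 * (n : ℝ) ^ 2 := by
      nlinarith [tel', mul_nonneg hkR0 hkR0, sq_nonneg ((n:ℝ))]
    have habs : |p M| ≤ |p (n ^ 2)| + 4 * (n : ℝ) ^ 3 + 8 * (n : ℝ) ^ 2 := by
      have := abs_sub_abs_le_abs_sub (p M) (p (n ^ 2))
      linarith
    have hM2 : (n : ℝ) ^ 4 ≤ (M : ℝ) ^ 2 := by nlinarith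
    have key : |p M| / (M : ℝ) ^ 2
        ≤ (|p (n ^ 2)| + 4 * (n : ℝ) ^ 3 + 8 * (n : ℝ) ^ 2) / (n : ℝ) ^ 4 := by
      apply div_le_div₀ (by positivity) habs (by positivity) hM2
    have hsplit : (|p (n ^ 2)| + 4 * (n : ℝ) ^ 3 + 8 * (n : ℝ) ^ 2) / (n : ℝ) ^ 4
        = |p (n ^ 2)| / (((n : ℝ)) ^ 2) ^ 2 + 4 / (n : ℝ) + 8 / (n : ℝ) ^ 2 := by
      have hN0 : (n : ℝ) ≠ 0 := by linarith
      field_simp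
    rw [abs_div, abs_of_nonneg (by positivity : (0:ℝ) ≤ (M : ℝ) ^ 2)]
    calc |p M| / (M : ℝ) ^ 2
        ≤ (|p (n ^ 2)| + 4 * (n : ℝ) ^ 3 + 8 * (n : ℝ) ^ 2) / (n : ℝ) ^ 4 := key
      _ = g M := by rw [hsplit]
  have claimB : Tendsto g atTop (nhds 0) := by
    have t1 : Tendsto (fun n : ℕ => |p (n ^ 2)| / ((n : ℝ) ^ 2) ^ 2) atTop (nhds 0) := by
      have := hsub.abs
      rw [abs_zero] at this
      apply this.congr
      intro n
      rw [abs_div, abs_of_nonneg (by positivity : (0:ℝ) ≤ ((n:ℝ) ^ 2) ^ 2)]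
    have t2 : Tendsto (fun n : ℕ => 4 / (n : ℝ)) atTop (nhds 0) :=
      tendsto_const_div_atTop_nhds_zero_nat 4
    have t3 : Tendsto (fun n : ℕ => 8 / ((n : ℝ)) ^ 2) atTop (nhds 0) := by
      apply Tendsto.div_atTop (tendsto_const_nhds (x := (8:ℝ)))
      exact (tendsto_pow_atTop (two_ne_zero)).comp tendsto_natCast_atTop_atTop
    have := ((t1.comp tendsto_sqrt_atTop).add (t2.comp tendsto_sqrt_atTop)).add
        (t3.comp tendsto_sqrt_atTop)
    simpa using this
  have habs : Tendsto (fun M : ℕ => |p M / (M : ℝ) ^ 2|) atTop (nhds 0) := by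
    apply squeeze_zero' (g := g)
    · filter_upwards with M; exact abs_nonneg _
    · filter_upwards [eventually_ge_atTop 1] with M hM using claimA M hM
    · exact claimB
  exact tendsto_zero_iff_abs_tendsto_zero _ |>.2 habs

end Bridge

section Stackelberg


def pureT : Bool → ℝ := fun b => if b then 1 else 0
def pureB : Bool → ℝ := fun b => if b then 0 else 1

lemma pureT_mem : pureT ∈ stdSimplex ℝ Bool :=
  ⟨fun x => by cases x <;> norm_num [pureT], by simp [Fintype.sum_bool, pureT]⟩
lemma pureB_mem : pureB ∈ stdSimplex ℝ Bool :=
  ⟨fun x => by cases x <;> norm_num [pureB], by simp [Fintype.sum_bool, pureB]⟩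

lemma pay_uL (z₁ z₂ : Bool → ℝ) :
    pay uL z₁ z₂ = z₁ true * z₂ true + z₁ false * z₂ false := by
  simp [pay, Fintype.sum_bool, uL]

lemma pay_u3 (z₁ z₂ : Bool → ℝ) :
    pay (fun a b => u3 (a, b)) z₁ z₂ = z₁ true * z₂ false - z₁ false * z₂ true := by
  simp [pay, Fintype.sum_bool, u3]
  ring

lemma stack_value :
    sInf {v | ∃ z₁ ∈ stdSimplex ℝ Bool, ∃ z₂ ∈ stdSimplex ℝ Bool,
        (∀ w ∈ stdSimplex ℝ Bool, pay uL w z₂ ≤ pay uL z₁ z₂) ∧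
        (∀ w ∈ stdSimplex ℝ Bool, pay uL z₁ w ≤ pay uL z₁ z₂) ∧
        v = pay (fun a b => u3 (a, b)) z₁ z₂} = 0 := by
  have hset : {v | ∃ z₁ ∈ stdSimplex ℝ Bool, ∃ z₂ ∈ stdSimplex ℝ Bool,
        (∀ w ∈ stdSimplex ℝ Bool, pay uL w z₂ ≤ pay uL z₁ z₂) ∧
        (∀ w ∈ stdSimplex ℝ Bool, pay uL z₁ w ≤ pay uL z₁ z₂) ∧
        v = pay (fun a b => u3 (a, b)) z₁ z₂} = {0} := by
    apply Set.eq_singleton_iff_unique_mem.mpr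
    constructor
    · refine ⟨pureT, pureT_mem, pureT, pureT_mem, ?_, ?_, ?_⟩
      · intro w hw
        obtain ⟨hw1, hw2⟩ := hw
        rw [Fintype.sum_bool] at hw2
        rw [pay_uL, pay_uL]
        have := hw1 false
        simp [pureT]
        linarith
      · intro w hw
        obtain ⟨hw1, hw2⟩ := hw
        rw [Fintype.sum_bool] at hw2
        rw [pay_uL, pay_uL]
        have := hw1 false
        simp [pureT]
        linarith
      · rw [pay_u3]; simp [pureT]
    · rintro v ⟨z₁, hz₁, z₂, hz₂, hbr1, hbr2, hv⟩
      obtain ⟨hz₁n, hz₁s⟩ := hz₁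
      obtain ⟨hz₂n, hz₂s⟩ := hz₂
      rw [Fintype.sum_bool] at hz₁s hz₂s
      have hp0 := hz₁n true
      have hp0' := hz₁n false
      have hq0 := hz₂n true
      have hq0' := hz₂n false
      have A1 := hbr1 pureT pureT_mem
      have A2 := hbr1 pureB pureB_mem
      have A3 := hbr2 pureT pureT_mem
      have A4 := hbr2 pureB pureB_mem
      rw [pay_uL, pay_uL] at A1 A2 A3 A4
      simp [pureT, pureB] at A1 A2 A3 A4
      rw [hv, pay_u3]
      have hpq : z₁ true = z₂ true := by
        rcases lt_trichotomy (z₂ true) (1/2) with h | h | h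
        · have hp : z₁ true = 0 := by nlinarith
          have hq : z₂ true = 0 := by nlinarith
          rw [hp, hq]
        · have : z₁ true = 1/2 := by nlinarith
          rw [this, h]
        · have hp : z₁ true = 1 := by nlinarith
          have hq : z₂ true = 1 := by nlinarith
          rw [hp, hq]
      have h1 : z₁ false = 1 - z₁ true := by linarith
      have h2 : z₂ false = 1 - z₂ true := by linarith
      rw [h1, h2, hpq]
      ring
  rw [hset]
  exact csInf_singleton 0

end Stackelberg
section NoRegretCore

/-- generic regret-matching strategy of player 1 with arbitrary tie-breaking -/
def Qgen (tb : (t : ℕ) → (Fin t → Bool × Bool) → ℝ) (t : ℕ) (h : Fin t → Bool × Bool) : ℝ :=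
  if max (rTB h) 0 + max (rBT h) 0 = 0 then tb t h
  else max (rBT h) 0 / (max (rTB h) 0 + max (rBT h) 0)


variable {Ω : Type} [MeasurableSpace Ω]

def STf (play : ℕ → Ω → Bool × Bool) (t : ℕ) (ω : Ω) : ℝ := ∑ m ∈ range t, xval (play m ω)
def SBf (play : ℕ → Ω → Bool × Bool) (t : ℕ) (ω : Ω) : ℝ := ∑ m ∈ range t, yval (play m ω)
def Af (play : ℕ → Ω → Bool × Bool) (t : ℕ) (ω : Ω) : ℝ := max (STf play t ω) 0
def Bfn (play : ℕ → Ω → Bool × Bool) (t : ℕ) (ω : Ω) : ℝ := max (SBf play t ω) 0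
def Zf (play : ℕ → Ω → Bool × Bool) (t : ℕ) (ω : Ω) : ℝ :=
  xval (play t ω) * Af play t ω + yval (play t ω) * Bfn play t ω
def Pf (play : ℕ → Ω → Bool × Bool) (M : ℕ) (ω : Ω) : ℝ := ∑ t ∈ range M, Zf play t ω

variable {play : ℕ → Ω → Bool × Bool}

lemma STf_abs_le (t : ℕ) (ω : Ω) : |STf play t ω| ≤ t := by
  calc |STf play t ω| ≤ ∑ m ∈ range t, |xval (play m ω)| := Finset.abs_sum_le_sum_abs _ _
    _ ≤ ∑ _m ∈ range t, (1:ℝ) := Finset.sum_le_sum fun m _ => abs_xval_le _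
    _ = t := by simp

lemma SBf_abs_le (t : ℕ) (ω : Ω) : |SBf play t ω| ≤ t := by
  calc |SBf play t ω| ≤ ∑ m ∈ range t, |yval (play m ω)| := Finset.abs_sum_le_sum_abs _ _
    _ ≤ ∑ _m ∈ range t, (1:ℝ) := Finset.sum_le_sum fun m _ => abs_yval_le _
    _ = t := by simp

lemma Af_nonneg (t : ℕ) (ω : Ω) : 0 ≤ Af play t ω := le_max_right _ _
lemma Bfn_nonneg (t : ℕ) (ω : Ω) : 0 ≤ Bfn play t ω := le_max_right _ _
lemma Af_le (t : ℕ) (ω : Ω) : Af play t ω ≤ t :=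
  max_le (le_trans (le_abs_self _) (STf_abs_le t ω)) (Nat.cast_nonneg t)
lemma Bfn_le (t : ℕ) (ω : Ω) : Bfn play t ω ≤ t :=
  max_le (le_trans (le_abs_self _) (SBf_abs_le t ω)) (Nat.cast_nonneg t)

lemma Zf_abs_le (t : ℕ) (ω : Ω) : |Zf play t ω| ≤ 2 * t := by
  have h1 := abs_xval_le (play t ω); have h2 := abs_yval_le (play t ω)
  have h3 := Af_nonneg (play := play) t ω; have h4 := Bfn_nonneg (play := play) t ω
  have h5 := Af_le (play := play) t ω; have h6 := Bfn_le (play := play) t ω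
  have : |Zf play t ω| ≤ |xval (play t ω)| * Af play t ω + |yval (play t ω)| * Bfn play t ω := by
    unfold Zf
    calc |xval (play t ω) * Af play t ω + yval (play t ω) * Bfn play t ω|
        ≤ |xval (play t ω) * Af play t ω| + |yval (play t ω) * Bfn play t ω| := abs_add_le _ _
      _ = |xval (play t ω)| * Af play t ω + |yval (play t ω)| * Bfn play t ω := by
          rw [abs_mul, abs_mul, abs_of_nonneg h3, abs_of_nonneg h4]
  nlinarith

lemma sq_max_le (s x : ℝ) : (max (s + x) 0) ^ 2 ≤ (max s 0 + x) ^ 2 := by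
  rcases le_or_gt (s + x) 0 with h | h
  · rw [max_eq_right h]; simpa using sq_nonneg (max s 0 + x)
  · rw [max_eq_left h.le]
    have h1 : s ≤ max s 0 := le_max_left _ _
    nlinarith

lemma phi_step (t : ℕ) (ω : Ω) :
    Af play (t+1) ω ^ 2 + Bfn play (t+1) ω ^ 2
      ≤ Af play t ω ^ 2 + Bfn play t ω ^ 2 + 2 * Zf play t ω + 2 := by
  have hST : STf play (t+1) ω = STf play t ω + xval (play t ω) := Finset.sum_range_succ _ _
  have hSB : SBf play (t+1) ω = SBf play t ω + yval (play t ω) := Finset.sum_range_succ _ _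
  have h1 : Af play (t+1) ω ^ 2 ≤ (Af play t ω + xval (play t ω)) ^ 2 := by
    unfold Af; rw [hST]; exact sq_max_le _ _
  have h2 : Bfn play (t+1) ω ^ 2 ≤ (Bfn play t ω + yval (play t ω)) ^ 2 := by
    unfold Bfn; rw [hSB]; exact sq_max_le _ _
  have hx := abs_xval_le (play t ω); have hy := abs_yval_le (play t ω)
  have hx2 : xval (play t ω) ^ 2 ≤ 1 := by
    rw [← sq_abs]; nlinarith [abs_nonneg (xval (play t ω))]
  have hy2 : yval (play t ω) ^ 2 ≤ 1 := by
    rw [← sq_abs]; nlinarith [abs_nonneg (yval (play t ω))]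
  unfold Zf
  nlinarith [h1, h2]

lemma phi_le (M : ℕ) (ω : Ω) :
    Af play M ω ^ 2 + Bfn play M ω ^ 2 ≤ 2 * Pf play M ω + 2 * M := by
  induction M with
  | zero => simp [Af, Bfn, STf, SBf, Pf]
  | succ M ih =>
    have h1 := phi_step (play := play) M ω
    have h2 : Pf play (M+1) ω = Pf play M ω + Zf play M ω := Finset.sum_range_succ _ _
    rw [h2]; push_cast; nlinarith

-- Measurability
lemma meas_v (hm : ∀ t, Measurable (play t)) (t : ℕ) (v : Bool × Bool → ℝ) :
    Measurable (fun ω => v (play t ω)) := Measurable.of_discrete.comp (hm t)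

lemma meas_STf (hm : ∀ t, Measurable (play t)) (t : ℕ) : Measurable (STf play t) :=
  Finset.measurable_sum _ fun m _ => meas_v hm m xval
lemma meas_SBf (hm : ∀ t, Measurable (play t)) (t : ℕ) : Measurable (SBf play t) :=
  Finset.measurable_sum _ fun m _ => meas_v hm m yval
lemma meas_Af (hm : ∀ t, Measurable (play t)) (t : ℕ) : Measurable (Af play t) :=
  (meas_STf hm t).max measurable_const
lemma meas_Bfn (hm : ∀ t, Measurable (play t)) (t : ℕ) : Measurable (Bfn play t) :=
  (meas_SBf hm t).max measurable_const
lemma meas_Zf (hm : ∀ t, Measurable (play t)) (t : ℕ) : Measurable (Zf play t) :=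
  ((meas_v hm t xval).mul (meas_Af hm t)).add ((meas_v hm t yval).mul (meas_Bfn hm t))
lemma meas_Pf (hm : ∀ t, Measurable (play t)) (M : ℕ) : Measurable (Pf play M) :=
  Finset.measurable_sum _ fun t _ => meas_Zf hm t

variable {μ : Measure Ω}

lemma intg [IsProbabilityMeasure μ] {f : Ω → ℝ} (hf : Measurable f) {C : ℝ}
    (h : ∀ ω, |f ω| ≤ C) : Integrable f μ :=
  Integrable.mono' (integrable_const C) hf.aestronglyMeasurable
    (Filter.Eventually.of_forall fun ω => by rw [Real.norm_eq_abs]; exact h ω)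

/-- integrability of anything that reads the history up to and including time `t` -/
lemma comp_int [IsProbabilityMeasure μ] (hm : ∀ t, Measurable (play t)) (t : ℕ)
    (G : ((Fin t → Bool × Bool) × (Bool × Bool)) → ℝ) :
    Integrable (fun ω => G ((fun s : Fin t => play s.1 ω), play t ω)) μ := by
  obtain ⟨C, hC⟩ := Finite.exists_le (fun q : (Fin t → Bool × Bool) × (Bool × Bool) => |G q|)
  exact intg (Measurable.of_discrete.comp
    ((measurable_pi_lambda _ fun s : Fin t => hm s.1).prodMk (hm t))) (fun ω => hC _)

-- finite-history versions of A and B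
def AF {t : ℕ} (h : Fin t → Bool × Bool) : ℝ := max (∑ m, xval (h m)) 0
def BF {t : ℕ} (h : Fin t → Bool × Bool) : ℝ := max (∑ m, yval (h m)) 0

lemma AF_eq (t : ℕ) (ω : Ω) : AF (fun s : Fin t => play s.1 ω) = Af play t ω := by
  unfold AF Af STf
  rw [Fin.sum_univ_eq_sum_range (fun m => xval (play m ω)) t]
lemma BF_eq (t : ℕ) (ω : Ω) : BF (fun s : Fin t => play s.1 ω) = Bfn play t ω := by
  unfold BF Bfn SBf
  rw [Fin.sum_univ_eq_sum_range (fun m => yval (play m ω)) t]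

def dval (b : Bool) : ℝ := if b = false then 1 else -1
def eval (b : Bool) : ℝ := if b = true then 1 else -1

/-- the key property of regret matching: expected instantaneous regret
in the direction of the positive part of the cumulative regret vanishes -/
lemma key_id (tb : (t : ℕ) → (Fin t → Bool × Bool) → ℝ) (t : ℕ) (ω : Ω) :
    Qgen tb t (fun s : Fin t => play s.1 ω) * Af play t ω
      = (1 - Qgen tb t (fun s : Fin t => play s.1 ω)) * Bfn play t ω := by
  have hT : rTB (fun s : Fin t => play s.1 ω) = STf play t ω / t := by
    unfold rTB STf
    rw [← Fin.sum_univ_eq_sum_range (fun m => xval (play m ω)) t]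
    rfl
  have hB : rBT (fun s : Fin t => play s.1 ω) = SBf play t ω / t := by
    unfold rBT SBf
    rw [← Fin.sum_univ_eq_sum_range (fun m => yval (play m ω)) t]
    rfl
  cases t with
  | zero =>
    have h1 : Af play 0 ω = 0 := by simp [Af, STf]
    have h2 : Bfn play 0 ω = 0 := by simp [Bfn, SBf]
    rw [h1, h2]; ring
  | succ k =>
    set t := k + 1
    have ht : (0:ℝ) < t := by positivity
    have hA : Af play t ω = max (rTB (fun s : Fin t => play s.1 ω)) 0 * t := by
      rw [hT, max_mul_of_nonneg _ _ ht.le, div_mul_cancel₀ _ ht.ne', zero_mul]; rfl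
    have hBn : Bfn play t ω = max (rBT (fun s : Fin t => play s.1 ω)) 0 * t := by
      rw [hB, max_mul_of_nonneg _ _ ht.le, div_mul_cancel₀ _ ht.ne', zero_mul]; rfl
    unfold Qgen
    by_cases hc : max (rTB (fun s : Fin t => play s.1 ω)) 0
        + max (rBT (fun s : Fin t => play s.1 ω)) 0 = 0
    · have hA0 : max (rTB (fun s : Fin t => play s.1 ω)) 0 = 0 := by
        have := le_max_right (rTB (fun s : Fin t => play s.1 ω)) 0
        have := le_max_right (rBT (fun s : Fin t => play s.1 ω)) 0
        linarith
      have hB0 : max (rBT (fun s : Fin t => play s.1 ω)) 0 = 0 := by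
        have := le_max_right (rTB (fun s : Fin t => play s.1 ω)) 0
        have := le_max_right (rBT (fun s : Fin t => play s.1 ω)) 0
        linarith
      rw [if_pos hc, hA, hBn, hA0, hB0]; ring
    · rw [if_neg hc, hA, hBn]
      field_simp
      ring

/-- orthogonality: `E[Z_t g(h_t)] = 0` for any function `g` of the history -/
lemma orth [IsProbabilityMeasure μ] (hm : ∀ t, Measurable (play t))
    (tb : (t : ℕ) → (Fin t → Bool × Bool) → ℝ) (hF : Follows1 μ play (Qgen tb))
    (t : ℕ) (g : (Fin t → Bool × Bool) → ℝ) :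
    ∫ ω, Zf play t ω * g (fun s : Fin t => play s.1 ω) ∂μ = 0 := by
  set f0 : (Fin t → Bool × Bool) → Bool → ℝ :=
    fun h b => (dval b * AF h - eval b * BF h) * g h with hf0
  have point1 : ∀ ω : Ω, Zf play t ω * g (fun s : Fin t => play s.1 ω)
      = (if (play t ω).1 = true then (1:ℝ) else 0) *
          f0 (fun s : Fin t => play s.1 ω) (play t ω).2
        + eval (play t ω).2 * BF (fun s : Fin t => play s.1 ω)
            * g (fun s : Fin t => play s.1 ω) := by
    intro ω
    rw [hf0]
    simp only
    rw [AF_eq, BF_eq]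
    rcases hp : play t ω with ⟨a, b⟩
    unfold Zf
    rw [hp]
    cases a <;> cases b <;> simp [xval, yval, dval, eval] <;> ring
  rw [integral_congr_ae (Filter.Eventually.of_forall point1)]
  have int1 : Integrable (fun ω => (if (play t ω).1 = true then (1:ℝ) else 0) *
      f0 (fun s : Fin t => play s.1 ω) (play t ω).2) μ :=
    comp_int hm t (fun q => (if q.2.1 = true then (1:ℝ) else 0) * f0 q.1 q.2.2)
  have int2 : Integrable (fun ω => eval (play t ω).2 * BF (fun s : Fin t => play s.1 ω)
      * g (fun s : Fin t => play s.1 ω)) μ :=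
    comp_int hm t (fun q => eval q.2.2 * BF q.1 * g q.1)
  rw [integral_add int1 int2, hF t f0]
  have int3 : Integrable (fun ω => Qgen tb t (fun s : Fin t => play s.1 ω) *
      f0 (fun s : Fin t => play s.1 ω) (play t ω).2) μ :=
    comp_int hm t (fun q => Qgen tb t q.1 * f0 q.1 q.2.2)
  rw [← integral_add int3 int2]
  have point2 : ∀ ω : Ω, Qgen tb t (fun s : Fin t => play s.1 ω) *
      f0 (fun s : Fin t => play s.1 ω) (play t ω).2
        + eval (play t ω).2 * BF (fun s : Fin t => play s.1 ω)
            * g (fun s : Fin t => play s.1 ω) = 0 := by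
    intro ω
    have hk := key_id (play := play) tb t ω
    rw [hf0]
    simp only
    rw [AF_eq, BF_eq]
    cases hb : (play t ω).2
    · simp [dval, eval]
      linear_combination (g fun s : Fin t => play s.1 ω) * hk
    · simp [dval, eval]
      linear_combination (-(g fun s : Fin t => play s.1 ω)) * hk
  rw [integral_congr_ae (Filter.Eventually.of_forall point2)]
  simp

end NoRegretCore
section NoRegretCore2

variable {Ω : Type} [MeasurableSpace Ω] {play : ℕ → Ω → Bool × Bool} {μ : Measure Ω}

def extH {n : ℕ} (h : Fin n → Bool × Bool) : ℕ → Bool × Bool :=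
  fun m => if hm : m < n then h ⟨m, hm⟩ else (true, true)

def ZH (s : ℕ) {n : ℕ} (h : Fin n → Bool × Bool) : ℝ :=
  xval (extH h s) * max (∑ m ∈ range s, xval (extH h m)) 0
    + yval (extH h s) * max (∑ m ∈ range s, yval (extH h m)) 0

lemma extH_eq (n m : ℕ) (hmn : m < n) (ω : Ω) :
    extH (fun s : Fin n => play s.1 ω) m = play m ω := dif_pos hmn

lemma ZH_eq (s n : ℕ) (hs : s < n) (ω : Ω) :
    ZH s (fun i : Fin n => play i.1 ω) = Zf play s ω := by
  have h1 : ∑ m ∈ range s, xval (extH (fun i : Fin n => play i.1 ω) m)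
      = ∑ m ∈ range s, xval (play m ω) :=
    Finset.sum_congr rfl fun m hm => by
      rw [extH_eq n m (lt_trans (Finset.mem_range.1 hm) hs)]
  have h2 : ∑ m ∈ range s, yval (extH (fun i : Fin n => play i.1 ω) m)
      = ∑ m ∈ range s, yval (play m ω) :=
    Finset.sum_congr rfl fun m hm => by
      rw [extH_eq n m (lt_trans (Finset.mem_range.1 hm) hs)]
  unfold ZH Zf Af Bfn STf SBf
  rw [extH_eq n s hs, h1, h2]

lemma Pf_rep (M : ℕ) (ω : Ω) :
    Pf play M ω = ∑ s ∈ range M, ZH s (fun i : Fin M => play i.1 ω) :=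
  (Finset.sum_congr rfl fun s hs => (ZH_eq s M (Finset.mem_range.1 hs) ω).symm)

lemma Pf_abs_le (M : ℕ) (ω : Ω) : |Pf play M ω| ≤ 2 * (M:ℝ)^2 := by
  calc |Pf play M ω| ≤ ∑ t ∈ range M, |Zf play t ω| := Finset.abs_sum_le_sum_abs _ _
    _ ≤ ∑ _t ∈ range M, 2 * (M:ℝ) := by
        apply Finset.sum_le_sum
        intro t ht
        refine (Zf_abs_le t ω).trans ?_
        have h := (Finset.mem_range.1 ht).le
        have : (t:ℝ) ≤ M := by exact_mod_cast h
        linarith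
    _ = M * (2 * (M:ℝ)) := by
        rw [Finset.sum_const, Finset.card_range, nsmul_eq_mul]
    _ = 2 * (M:ℝ)^2 := by ring

lemma Pf_sq_le [IsProbabilityMeasure μ] (hm : ∀ t, Measurable (play t))
    (tb : (t : ℕ) → (Fin t → Bool × Bool) → ℝ) (hF : Follows1 μ play (Qgen tb)) (M : ℕ) :
    ∫ ω, (Pf play M ω)^2 ∂μ ≤ 4 * (M:ℝ)^3 := by
  induction M with
  | zero => simp [Pf]
  | succ M ih =>
    have hPZ : ∀ ω : Ω, Pf play (M+1) ω = Pf play M ω + Zf play M ω :=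
      fun ω => Finset.sum_range_succ _ _
    have point : ∀ ω : Ω, (Pf play (M+1) ω)^2
        = (Pf play M ω)^2 + (2 * (Zf play M ω * Pf play M ω) + (Zf play M ω)^2) := by
      intro ω; rw [hPZ ω]; ring
    rw [integral_congr_ae (Filter.Eventually.of_forall point)]
    have iP2 : Integrable (fun ω => (Pf play M ω)^2) μ := by
      apply intg ((meas_Pf hm M).pow_const 2) (C := (2 * (M:ℝ)^2)^2)
      intro ω
      rw [abs_pow]
      exact pow_le_pow_left₀ (abs_nonneg _) (Pf_abs_le M ω) 2
    have iZP : Integrable (fun ω => Zf play M ω * Pf play M ω) μ := by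
      apply intg ((meas_Zf hm M).mul (meas_Pf hm M)) (C := (2*(M:ℝ)) * (2 * (M:ℝ)^2))
      intro ω
      rw [Pi.mul_apply, abs_mul]
      exact mul_le_mul (Zf_abs_le M ω) (Pf_abs_le M ω) (abs_nonneg _)
        (by positivity)
    have iZ2 : Integrable (fun ω => (Zf play M ω)^2) μ := by
      apply intg ((meas_Zf hm M).pow_const 2) (C := (2*(M:ℝ))^2)
      intro ω
      rw [abs_pow]
      exact pow_le_pow_left₀ (abs_nonneg _) (Zf_abs_le M ω) 2
    have i2ZP : Integrable (fun ω => 2 * (Zf play M ω * Pf play M ω)) μ := iZP.const_mul 2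
    have iSum : Integrable
        (fun ω => 2 * (Zf play M ω * Pf play M ω) + (Zf play M ω)^2) μ := i2ZP.add iZ2
    rw [integral_add iP2 iSum, integral_add i2ZP iZ2, MeasureTheory.integral_const_mul]
    have hZP : ∫ ω, Zf play M ω * Pf play M ω ∂μ = 0 := by
      rw [integral_congr_ae (Filter.Eventually.of_forall
        (fun ω => by rw [Pf_rep M ω] :
          ∀ ω : Ω, Zf play M ω * Pf play M ω
            = Zf play M ω * ∑ s ∈ range M, ZH s (fun i : Fin M => play i.1 ω)))]
      exact orth hm tb hF M (fun h => ∑ s ∈ range M, ZH s h)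
    have hZ2 : ∫ ω, (Zf play M ω)^2 ∂μ ≤ (2*(M:ℝ))^2 := by
      have h1 : ∀ ω : Ω, (Zf play M ω)^2 ≤ (2*(M:ℝ))^2 := by
        intro ω
        rw [← sq_abs]
        exact pow_le_pow_left₀ (abs_nonneg _) (Zf_abs_le M ω) 2
      calc ∫ ω, (Zf play M ω)^2 ∂μ ≤ ∫ _ω, (2*(M:ℝ))^2 ∂μ :=
            integral_mono iZ2 (integrable_const _) h1
        _ = (2*(M:ℝ))^2 := by simp
    rw [hZP]
    have hM0 : (0:ℝ) ≤ (M:ℝ) := Nat.cast_nonneg M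
    push_cast
    nlinarith [ih, hZ2, hM0]

end NoRegretCore2
section NoRegretCore3

variable {Ω : Type} [MeasurableSpace Ω] {play : ℕ → Ω → Bool × Bool} {μ : Measure Ω}

lemma sub_ae [IsProbabilityMeasure μ] (hm : ∀ t, Measurable (play t))
    (tb : (t : ℕ) → (Fin t → Bool × Bool) → ℝ) (hF : Follows1 μ play (Qgen tb)) :
    ∀ᵐ ω ∂μ, Tendsto (fun n : ℕ => Pf play (n^2) ω / ((n:ℝ)^2)^2) atTop (nhds 0) := by
  set q : ℕ → Ω → ℝ := fun n ω => Pf play (n^2) ω / ((n:ℝ)^2)^2 with hq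
  set F : ℕ → Ω → ENNReal := fun n ω => ENNReal.ofReal ((q n ω)^2) with hFdef
  have hmq : ∀ n, Measurable (q n) := fun n => (meas_Pf hm _).div_const _
  have hmF : ∀ n, Measurable (F n) :=
    fun n => ENNReal.measurable_ofReal.comp ((hmq n).pow_const 2)
  have hq0 : ∀ ω, q 0 ω = 0 := by intro ω; simp [hq, Pf]
  have hqb : ∀ n (ω : Ω), |q n ω| ≤ 2 * ((n^2 : ℕ):ℝ)^2 := by
    intro n ω
    rcases Nat.eq_zero_or_pos n with h | h
    · subst h; rw [hq0]; simp
    · have h1 : (1:ℝ) ≤ ((n:ℝ)^2)^2 := by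
        have hx : (1:ℝ) ≤ (n:ℝ) := by exact_mod_cast h
        have h2 : (1:ℝ) ≤ (n:ℝ)^2 := by nlinarith
        nlinarith
      rw [hq]
      simp only
      rw [abs_div, abs_of_nonneg (by positivity : (0:ℝ) ≤ ((n:ℝ)^2)^2)]
      exact (div_le_self (abs_nonneg _) h1).trans (Pf_abs_le _ ω)
  have hqint : ∀ n, Integrable (fun ω => (q n ω)^2) μ := by
    intro n
    apply intg ((hmq n).pow_const 2) (C := (2 * ((n^2 : ℕ):ℝ)^2)^2)
    intro ω
    rw [abs_pow]
    exact pow_le_pow_left₀ (abs_nonneg _) (hqb n ω) 2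
  have hbound : ∀ n : ℕ, 1 ≤ n → ∫ ω, (q n ω)^2 ∂μ ≤ 4 / (n:ℝ)^2 := by
    intro n hn
    have hn0 : (n:ℝ) ≠ 0 := by positivity
    have hP := Pf_sq_le hm tb hF (n^2)
    have hcast : (((n^2 : ℕ)):ℝ) = (n:ℝ)^2 := by push_cast; ring
    rw [hcast] at hP
    have hpt : (fun ω => (q n ω)^2) = fun ω => (Pf play (n^2) ω)^2 / (n:ℝ)^8 := by
      funext ω
      rw [hq]
      simp only
      rw [div_pow]
      congr 1
      ring
    rw [hpt, integral_div]
    calc (∫ ω, (Pf play (n^2) ω)^2 ∂μ) / (n:ℝ)^8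
        ≤ (4 * ((n:ℝ)^2)^3) / (n:ℝ)^8 := by gcongr
      _ = 4 / (n:ℝ)^2 := by field_simp
  have hlin : ∀ n : ℕ, ∫⁻ ω, F n ω ∂μ ≤ ENNReal.ofReal (4 / (n:ℝ)^2) := by
    intro n
    rcases Nat.eq_zero_or_pos n with h | h
    · subst h
      have : ∀ ω : Ω, F 0 ω = 0 := by intro ω; rw [hFdef]; simp [hq0]
      rw [lintegral_congr this]
      simp
    · have h1 : ∫⁻ ω, F n ω ∂μ = ENNReal.ofReal (∫ ω, (q n ω)^2 ∂μ) :=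
        (ofReal_integral_eq_lintegral_ofReal (hqint n)
          (Filter.Eventually.of_forall fun ω => sq_nonneg _)).symm
      rw [h1]
      exact ENNReal.ofReal_le_ofReal (hbound n h)
  have hsumR : Summable (fun n : ℕ => 4 / (n:ℝ)^2) := by
    have := (Real.summable_one_div_nat_pow (p := 2)).2 (by norm_num)
    have h2 := this.mul_left 4
    apply h2.congr
    intro n
    rw [mul_one_div]
  have hsum : ∑' n, ∫⁻ ω, F n ω ∂μ ≠ ⊤ := by
    apply ne_top_of_le_ne_top _ (ENNReal.tsum_le_tsum hlin)
    rw [← ENNReal.ofReal_tsum_of_nonneg (fun n => by positivity) hsumR]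
    exact ENNReal.ofReal_ne_top
  have htop := ae_lt_top (Measurable.ennreal_tsum hmF)
    (by rw [lintegral_tsum (fun n => (hmF n).aemeasurable)]; exact hsum)
  filter_upwards [htop] with ω hω
  have ht0 : Tendsto (fun n => F n ω) atTop (nhds 0) :=
    ENNReal.tendsto_atTop_zero_of_tsum_ne_top hω.ne
  have ht1 : Tendsto (fun n => (q n ω)^2) atTop (nhds 0) := by
    have h := (ENNReal.tendsto_toReal (by simp)).comp ht0
    simp only [ENNReal.toReal_zero] at h
    apply h.congr
    intro n
    exact ENNReal.toReal_ofReal (sq_nonneg _)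
  have ht2 : Tendsto (fun n => |q n ω|) atTop (nhds 0) := by
    have h := (Real.continuous_sqrt.tendsto 0).comp ht1
    rw [Real.sqrt_zero] at h
    apply h.congr
    intro n
    exact Real.sqrt_sq_eq_abs (q n ω)
  exact tendsto_zero_iff_abs_tendsto_zero _ |>.2 ht2

end NoRegretCore3


lemma max_div_zero (a c : ℝ) (hc : 0 ≤ c) : max (a / c) 0 = max a 0 / c := by
  rw [← max_div_div_right hc a 0, zero_div]

lemma main_noregret (tb : (t : ℕ) → (Fin t → Bool × Bool) → ℝ) :
    NoRegret1 (Qgen tb) := by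
  intro Ω mΩ μ hμ play hm hF b
  haveI := hμ
  have hsub := sub_ae hm tb hF
  filter_upwards [hsub] with ω hω
  have hp0 : Pf play 0 ω = 0 := by simp [Pf]
  have hinc : ∀ t : ℕ, |Pf play (t+1) ω - Pf play t ω| ≤ 2 * t := by
    intro t
    have h : Pf play (t+1) ω - Pf play t ω = Zf play t ω := by
      rw [show Pf play (t+1) ω = Pf play t ω + Zf play t ω from Finset.sum_range_succ _ _]
      ring
    rw [h]
    exact Zf_abs_le t ω
  have hbr := bridge (fun M => Pf play M ω) hp0 hinc hω
  have hsq : Tendsto (fun M : ℕ => 2 * (Pf play M ω / (M:ℝ)^2) + 2 / (M:ℝ))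
      atTop (nhds 0) := by
    have h2 := tendsto_const_div_atTop_nhds_zero_nat (2:ℝ)
    have := (hbr.const_mul 2).add h2
    simpa using this
  have hgen : ∀ (S : ℕ → ℝ) (hS : ∀ M, max (S M) 0 ≤ Af play M ω ∨ max (S M) 0 ≤ Bfn play M ω)
      (hSnn : True), True := fun _ _ _ => trivial
  -- convergence of Af M ω / M and Bfn M ω / M to zero
  have hA : Tendsto (fun M : ℕ => Af play M ω / M) atTop (nhds 0) := by
    have h1 : Tendsto (fun M : ℕ => (Af play M ω / M)^2) atTop (nhds 0) := by
      apply squeeze_zero' (Filter.Eventually.of_forall fun M => sq_nonneg _) _ hsq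
      filter_upwards [eventually_ge_atTop 1] with M hM
      have hphi := phi_le (play := play) M ω
      have hMpos : (0:ℝ) < M := by exact_mod_cast hM
      have hB2 := sq_nonneg (Bfn play M ω)
      rw [div_pow]
      calc (Af play M ω)^2 / (M:ℝ)^2 ≤ (2 * Pf play M ω + 2 * M) / (M:ℝ)^2 := by
            apply div_le_div_of_nonneg_right ?_ (by positivity)
            linarith
        _ = 2 * (Pf play M ω / (M:ℝ)^2) + 2 / (M:ℝ) := by field_simp
    have h2 := (Real.continuous_sqrt.tendsto 0).comp h1
    rw [Real.sqrt_zero] at h2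
    apply h2.congr
    intro M
    show Real.sqrt ((Af play M ω / M)^2) = Af play M ω / M
    rw [Real.sqrt_sq_eq_abs,
      abs_of_nonneg (div_nonneg (Af_nonneg _ _) (Nat.cast_nonneg _))]
  have hB : Tendsto (fun M : ℕ => Bfn play M ω / M) atTop (nhds 0) := by
    have h1 : Tendsto (fun M : ℕ => (Bfn play M ω / M)^2) atTop (nhds 0) := by
      apply squeeze_zero' (Filter.Eventually.of_forall fun M => sq_nonneg _) _ hsq
      filter_upwards [eventually_ge_atTop 1] with M hM
      have hphi := phi_le (play := play) M ω
      have hMpos : (0:ℝ) < M := by exact_mod_cast hM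
      have hA2 := sq_nonneg (Af play M ω)
      rw [div_pow]
      calc (Bfn play M ω)^2 / (M:ℝ)^2 ≤ (2 * Pf play M ω + 2 * M) / (M:ℝ)^2 := by
            apply div_le_div_of_nonneg_right ?_ (by positivity)
            linarith
        _ = 2 * (Pf play M ω / (M:ℝ)^2) + 2 / (M:ℝ) := by field_simp
    have h2 := (Real.continuous_sqrt.tendsto 0).comp h1
    rw [Real.sqrt_zero] at h2
    apply h2.congr
    intro M
    show Real.sqrt ((Bfn play M ω / M)^2) = Bfn play M ω / M
    rw [Real.sqrt_sq_eq_abs,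
      abs_of_nonneg (div_nonneg (Bfn_nonneg _ _) (Nat.cast_nonneg _))]
  cases b with
  | false =>
    have hsum : ∀ M : ℕ, (∑ t ∈ Finset.range M,
        (uL false (play t ω).2 - uL (play t ω).1 (play t ω).2)) = STf play M ω := by
      intro M
      apply Finset.sum_congr rfl
      intro t _
      rcases hp : play t ω with ⟨a, c⟩
      cases a <;> cases c <;> simp [uL, xval]
    apply hA.congr
    intro M
    rw [hsum, max_div_zero _ _ (Nat.cast_nonneg M)]
    rfl
  | true =>
    have hsum : ∀ M : ℕ, (∑ t ∈ Finset.range M,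
        (uL true (play t ω).2 - uL (play t ω).1 (play t ω).2)) = SBf play M ω := by
      intro M
      apply Finset.sum_congr rfl
      intro t _
      rcases hp : play t ω with ⟨a, c⟩
      cases a <;> cases c <;> simp [uL, yval]
    apply hB.congr
    intro M
    rw [hsum, max_div_zero _ _ (Nat.cast_nonneg M)]
    rfl


def swapH {t : ℕ} (h : Fin t → Bool × Bool) : Fin t → Bool × Bool :=
  fun s => ((h s).2, (h s).1)

lemma uL_comm (a b : Bool) : uL a b = uL b a := by
  cases a <;> cases b <;> simp [uL]

lemma noregret1_Q1 : NoRegret1 Q1 := by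
  have h : Q1 = Qgen tb1 := rfl
  rw [h]
  exact main_noregret tb1

lemma noregret2_Q2 : NoRegret2 Q2 := by
  intro Ω mΩ μ hμ play hm hF b
  haveI := hμ
  set play' : ℕ → Ω → Bool × Bool := fun t ω => ((play t ω).2, (play t ω).1) with hplay'
  have hm' : ∀ t, Measurable (play' t) := fun t => ((hm t).snd.prodMk (hm t).fst)
  have hQeq : (fun (t : ℕ) (h : Fin t → Bool × Bool) => Q2 t (swapH h))
      = Qgen (fun t h => tb2 t (swapH h)) := by
    funext t h
    show Q2 t (swapH h) = _
    unfold Q2 Qgen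
    have h1 : rLR (swapH h) = rTB h := rfl
    have h2 : rRL (swapH h) = rBT h := rfl
    rw [h1, h2]
  have hF' : Follows1 μ play' (Qgen (fun t h => tb2 t (swapH h))) := by
    intro t f
    rw [← hQeq]
    exact hF t (fun h b => f (swapH h) b)
  have hnr := main_noregret (fun t h => tb2 t (swapH h)) Ω mΩ μ hμ play' hm' hF' b
  filter_upwards [hnr] with ω hω
  have hsum : ∀ M : ℕ,
      (∑ t ∈ Finset.range M, (uL b (play' t ω).2 - uL (play' t ω).1 (play' t ω).2))
        = ∑ t ∈ Finset.range M, (uL (play t ω).1 b - uL (play t ω).1 (play t ω).2) := by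
    intro M
    apply Finset.sum_congr rfl
    intro t _
    show uL b (play t ω).1 - uL (play t ω).2 (play t ω).1 = _
    rw [uL_comm b, uL_comm (play t ω).2]
  apply hω.congr
  intro M
  rw [hsum]

section Cycle

variable {Ω : Type} [MeasurableSpace Ω] {μ : Measure Ω} {play : ℕ → Ω → Bool × Bool}

lemma cycle_ae [IsProbabilityMeasure μ] (hm : ∀ t, Measurable (play t))
    (hF1 : Follows1 μ play Q1) (hF2 : Follows2 μ play Q2) :
    ∀ᵐ ω ∂μ, ∀ t, play t ω = cyc t := by
  have step : ∀ t : ℕ, (∀ᵐ ω ∂μ, ∀ s, s < t → play s ω = cyc s) →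
      (∀ᵐ ω ∂μ, play t ω = cyc t) := by
    intro t hprev
    have hhist : ∀ᵐ ω ∂μ, (fun s : Fin t => play s.1 ω) = cycH t := by
      filter_upwards [hprev] with ω h
      funext s
      exact h s.1 s.2
    have hset1 : MeasurableSet {ω | (play t ω).1 = true} :=
      (hm t) (MeasurableSet.of_discrete (s := {p : Bool × Bool | p.1 = true}))
    have hset2 : MeasurableSet {ω | (play t ω).2 = true} :=
      (hm t) (MeasurableSet.of_discrete (s := {p : Bool × Bool | p.2 = true}))
    have lhs1 : ∫ ω, (if (play t ω).1 = true then (1:ℝ) else 0) * 1 ∂μ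
        = (μ {ω | (play t ω).1 = true}).toReal := by
      rw [← measureReal_def, ← integral_indicator_one hset1]
      apply integral_congr_ae (Filter.Eventually.of_forall _)
      intro ω
      rw [mul_one, Set.indicator_apply]
      simp [Set.mem_setOf_eq]
    have rhs1 : ∫ ω, Q1 t (fun s : Fin t => play s.1 ω) * 1 ∂μ = Q1 t (cycH t) := by
      have hcg : (fun ω => Q1 t (fun s : Fin t => play s.1 ω) * 1)
          =ᵐ[μ] (fun _ => Q1 t (cycH t) * 1) := by
        filter_upwards [hhist] with ω h
        rw [h]
      rw [integral_congr_ae hcg]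
      simp
    have key1 : (μ {ω | (play t ω).1 = true}).toReal = Q1 t (cycH t) := by
      rw [← lhs1, ← rhs1]
      exact hF1 t (fun _ _ => 1)
    have lhs2 : ∫ ω, (if (play t ω).2 = true then (1:ℝ) else 0) * 1 ∂μ
        = (μ {ω | (play t ω).2 = true}).toReal := by
      rw [← measureReal_def, ← integral_indicator_one hset2]
      apply integral_congr_ae (Filter.Eventually.of_forall _)
      intro ω
      rw [mul_one, Set.indicator_apply]
      simp [Set.mem_setOf_eq]
    have rhs2 : ∫ ω, Q2 t (fun s : Fin t => play s.1 ω) * 1 ∂μ = Q2 t (cycH t) := by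
      have hcg : (fun ω => Q2 t (fun s : Fin t => play s.1 ω) * 1)
          =ᵐ[μ] (fun _ => Q2 t (cycH t) * 1) := by
        filter_upwards [hhist] with ω h
        rw [h]
      rw [integral_congr_ae hcg]
      simp
    have key2 : (μ {ω | (play t ω).2 = true}).toReal = Q2 t (cycH t) := by
      rw [← lhs2, ← rhs2]
      exact hF2 t (fun _ _ => 1)
    have comp1 : ∀ᵐ ω ∂μ, (play t ω).1 = (cyc t).1 := by
      rcases hc : (cyc t).1 with _ | _
      · -- (cyc t).1 = false : measure of {.1 = true} is 0
        have h0 : (μ {ω | (play t ω).1 = true}).toReal = 0 := by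
          rw [key1, Q1_cycH, hc]; simp
        have h1 : μ {ω | (play t ω).1 = true} = 0 := by
          rcases (ENNReal.toReal_eq_zero_iff _).1 h0 with h | h
          · exact h
          · exact absurd h (measure_ne_top μ _)
        rw [ae_iff]
        have hEq : {ω | ¬ (play t ω).1 = false} = {ω | (play t ω).1 = true} := by
          ext ω; simp
        rw [hEq]
        exact h1
      · have h0 : (μ {ω | (play t ω).1 = true}).toReal = 1 := by
          rw [key1, Q1_cycH, hc]; simp
        have h1 : μ {ω | (play t ω).1 = true} = 1 := by
          exact (ENNReal.toReal_eq_one_iff _).1 h0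
        rw [ae_iff]
        have hcompl := measure_compl hset1 (measure_ne_top μ _)
        rw [measure_univ, h1] at hcompl
        have hEq : {ω | ¬ (play t ω).1 = true} = {ω | (play t ω).1 = true}ᶜ := rfl
        rw [hEq, hcompl]
        simp
    have comp2 : ∀ᵐ ω ∂μ, (play t ω).2 = (cyc t).2 := by
      rcases hc : (cyc t).2 with _ | _
      · have h0 : (μ {ω | (play t ω).2 = true}).toReal = 0 := by
          rw [key2, Q2_cycH, hc]; simp
        have h1 : μ {ω | (play t ω).2 = true} = 0 := by
          rcases (ENNReal.toReal_eq_zero_iff _).1 h0 with h | h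
          · exact h
          · exact absurd h (measure_ne_top μ _)
        rw [ae_iff]
        have hEq : {ω | ¬ (play t ω).2 = false} = {ω | (play t ω).2 = true} := by
          ext ω; simp
        rw [hEq]
        exact h1
      · have h0 : (μ {ω | (play t ω).2 = true}).toReal = 1 := by
          rw [key2, Q2_cycH, hc]; simp
        have h1 : μ {ω | (play t ω).2 = true} = 1 :=
          (ENNReal.toReal_eq_one_iff _).1 h0
        rw [ae_iff]
        have hcompl := measure_compl hset2 (measure_ne_top μ _)
        rw [measure_univ, h1] at hcompl
        have hEq : {ω | ¬ (play t ω).2 = true} = {ω | (play t ω).2 = true}ᶜ := rfl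
        rw [hEq, hcompl]
        simp
    filter_upwards [comp1, comp2] with ω h1 h2
    exact Prod.ext h1 h2
  have all : ∀ t : ℕ, ∀ᵐ ω ∂μ, ∀ s, s < t → play s ω = cyc s := by
    intro t
    induction t with
    | zero =>
      filter_upwards with ω s hs
      exact absurd hs (Nat.not_lt_zero s)
    | succ t ih =>
      filter_upwards [ih, step t ih] with ω h1 h2 s hs
      rcases Nat.lt_succ_iff_lt_or_eq.1 hs with h | h
      · exact h1 s h
      · subst h; exact h2
  rw [ae_all_iff]
  intro t
  filter_upwards [all (t+1)] with ω h using h t (Nat.lt_succ_self t)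

end Cycle

end Aux

/-- Counterexample 2: there exist no-regret strategies for the learners such
that play follows the period-3 cycle `(T,L),(B,R),(B,L),…` almost surely, so the
optimizer's long-run average utility is `-1/3`, strictly below the mixed
pessimistic Stackelberg value, which equals `0`. -/
theorem optimizer_below_mixed_pessimistic_value :
    NoRegret1 Q1 ∧ NoRegret2 Q2 ∧
      (∀ (Ω : Type) (_ : MeasurableSpace Ω) (μ : Measure Ω),
        IsProbabilityMeasure μ →
        ∀ play : ℕ → Ω → Bool × Bool, (∀ t, Measurable (play t)) →
          Follows1 μ play Q1 → Follows2 μ play Q2 →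
          (∀ᵐ ω ∂μ, ∀ t : ℕ, play t ω = cyc t) ∧
          (∀ᵐ ω ∂μ, Tendsto
            (fun M : ℕ => (∑ t ∈ Finset.range M, u3 (play t ω)) / M)
            atTop (nhds (-1/3)))) ∧
      -- the mixed pessimistic Stackelberg value of the game equals 0
      sInf {v | ∃ z₁ ∈ stdSimplex ℝ Bool, ∃ z₂ ∈ stdSimplex ℝ Bool,
        (∀ w ∈ stdSimplex ℝ Bool, pay uL w z₂ ≤ pay uL z₁ z₂) ∧
        (∀ w ∈ stdSimplex ℝ Bool, pay uL z₁ w ≤ pay uL z₁ z₂) ∧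
        v = pay (fun a b => u3 (a, b)) z₁ z₂} = 0 ∧
      (-1/3 : ℝ) < 0 := by
  refine ⟨noregret1_Q1, noregret2_Q2, ?_, stack_value, by norm_num⟩
  intro Ω mΩ μ hμ play hm hF1 hF2
  haveI := hμ
  have hc := cycle_ae hm hF1 hF2
  refine ⟨hc, ?_⟩
  filter_upwards [hc] with ω h
  have hs : ∀ M : ℕ, (∑ t ∈ Finset.range M, u3 (play t ω))
      = ∑ t ∈ Finset.range M, u3 (cyc t) :=
    fun M => Finset.sum_congr rfl fun t _ => by rw [h t]
  apply cyc_u3_tendsto.congr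
  intro M
  rw [hs]
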